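/- Let X be a finite vertex set of a graph G. Define Γ_X := C_X ⊔ crit(X), where crit(X) is the set of critical subsets of X, topologized by declaring each singleton {C} (C ∈ C_X) open and, for each Y ∈ crit(X) and cofinite 𝒞 ⊆ C_X(Y), the sets 𝒞 ∪ {Y} open. Then Γ_X is a compact Hausdorff space in which C_X is a dense discrete open subspace, i.e. Γ_X is a Hausdorff compactification of the discrete space C_X with finite remainder crit(X). -/

import Mathlib

open SimpleGraph Set

variable {V : Type*}

/-- The set of components of `G - X` (the subgraph of `G` induced on `Xᶜ`). -/
abbrev Comps (G : SimpleGraph V) (X : Set V) := (G.induce Xᶜ).ConnectedComponent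

/-- The vertex set (in `V`) of a component of `G - X`. -/
def suppV (G : SimpleGraph V) (X : Set V) (C : Comps G X) : Set V :=
  Subtype.val '' {v | (G.induce Xᶜ).connectedComponentMk v = C}

/-- The neighbourhood `N(C) ⊆ X` of a component `C` of `G - X`. -/
def nbhd (G : SimpleGraph V) (X : Set V) (C : Comps G X) : Set V :=
  {x ∈ X | ∃ v ∈ suppV G X C, G.Adj x v}

/-- `C_X(Y)`: the components of `G - X` with neighbourhood exactly `Y`. -/
def compsWithNbhd (G : SimpleGraph V) (X Y : Set V) : Set (Comps G X) :=
  {C | nbhd G X C = Y}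

/-- A finite vertex set `Y` is critical if `C_Y(Y)` is infinite. -/
def Critical (G : SimpleGraph V) (Y : Set V) : Prop :=
  Y.Finite ∧ (compsWithNbhd G Y Y).Infinite

/-- The inclusion graph homomorphism `G - X' → G - X`, for `X ⊆ X'`. -/
def inclHom (G : SimpleGraph V) {X X' : Set V} (h : X ⊆ X') :
    (G.induce X'ᶜ) →g (G.induce Xᶜ) where
  toFun v := ⟨v.1, fun hv => v.2 (h hv)⟩
  map_rel' := fun hadj => hadj

/-- `c_{X',X}`: sends each component of `G - X'` to the component of `G - X`
containing it. -/
def compMap (G : SimpleGraph V) {X X' : Set V} (h : X ⊆ X') :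
    Comps G X' → Comps G X :=
  SimpleGraph.ConnectedComponent.map (inclHom G h)

/-- `crit(X)`: the critical subsets of `X`. -/
def CritIn (G : SimpleGraph V) (X : Set V) : Set (Set V) :=
  {Y | Y ⊆ X ∧ Critical G Y}

/-- `Γ_X = C_X ⊔ crit(X)`. -/
def Gamma (G : SimpleGraph V) (X : Set V) := Comps G X ⊕ CritIn G X

/-- The basic open sets of `Γ_X`: singletons of components, and, for each critical
`Y ⊆ X` and cofinite `𝒞 ⊆ C_X(Y)`, the set `𝒞 ∪ {Y}`. -/
def gammaBasic (G : SimpleGraph V) (X : Set V) : Set (Set (Gamma G X)) :=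
  {s | ∃ C : Comps G X, s = {Sum.inl C}} ∪
  {s | ∃ (Y : CritIn G X) (𝒞 : Set (Comps G X)),
      𝒞 ⊆ compsWithNbhd G X Y.1 ∧ (compsWithNbhd G X Y.1 \ 𝒞).Finite ∧
      s = Sum.inl '' 𝒞 ∪ {Sum.inr Y}}

/-- The topology of `Γ_X`. -/
def gammaTop (G : SimpleGraph V) (X : Set V) : TopologicalSpace (Gamma G X) :=
  .generateFrom (gammaBasic G X)

lemma mem_suppV {G : SimpleGraph V} {X : Set V} {C : Comps G X} {v : V} :
    v ∈ suppV G X C ↔ ∃ h : v ∈ Xᶜ, (G.induce Xᶜ).connectedComponentMk ⟨v, h⟩ = C := by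
  constructor
  · rintro ⟨w, hw, rfl⟩
    exact ⟨w.2, hw⟩
  · rintro ⟨h, hc⟩
    exact ⟨⟨v, h⟩, hc, rfl⟩

lemma suppV_nonempty {G : SimpleGraph V} {X : Set V} (C : Comps G X) :
    (suppV G X C).Nonempty := by
  obtain ⟨v, rfl⟩ := C.exists_rep
  exact ⟨v.1, v, rfl, rfl⟩

lemma comps_eq_of_mem_suppV {G : SimpleGraph V} {X : Set V} {C C' : Comps G X} {v : V}
    (h : v ∈ suppV G X C) (h' : v ∈ suppV G X C') : C = C' := by
  obtain ⟨hv, hc⟩ := mem_suppV.1 h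
  obtain ⟨hv', hc'⟩ := mem_suppV.1 h'
  rw [← hc, ← hc']

lemma compMap_mk (G : SimpleGraph V) {X X' : Set V} (h : X ⊆ X') (w : ↥X'ᶜ) :
    compMap G h ((G.induce X'ᶜ).connectedComponentMk w) =
      (G.induce Xᶜ).connectedComponentMk (inclHom G h w) :=
  ConnectedComponent.map_mk _ _

lemma suppV_subset_compMap (G : SimpleGraph V) {X X' : Set V} (h : X ⊆ X') (C : Comps G X') :
    suppV G X' C ⊆ suppV G X (compMap G h C) := by
  intro v hv
  obtain ⟨hv', hc⟩ := mem_suppV.1 hv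
  refine mem_suppV.2 ⟨fun hx => hv' (h hx), ?_⟩
  rw [← hc, compMap_mk]
  rfl


lemma suppV_walk {G : SimpleGraph V} {X Y : Set V} (hYX : Y ⊆ X) {C : Comps G X}
    (hC : nbhd G X C ⊆ Y) {a b : ↥Yᶜ} (p : (G.induce Yᶜ).Walk a b)
    (ha : a.1 ∈ suppV G X C) : b.1 ∈ suppV G X C := by
  induction p with
  | nil => exact ha
  | @cons u m b hadj q ih =>
    apply ih
    obtain ⟨haX, hac⟩ := mem_suppV.1 ha
    have hGadj : G.Adj u.1 m.1 := hadj
    by_cases hmX : (m : V) ∈ X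
    · exfalso
      exact m.2 (hC ⟨hmX, u.1, ha, hGadj.symm⟩)
    · refine mem_suppV.2 ⟨hmX, ?_⟩
      rw [← hac]
      exact ConnectedComponent.sound
        (SimpleGraph.Adj.reachable (show (G.induce Xᶜ).Adj ⟨m.1, hmX⟩ ⟨u.1, haX⟩ from hGadj.symm))

lemma suppV_compMap {G : SimpleGraph V} {X Y : Set V} (hYX : Y ⊆ X) (C : Comps G X)
    (hC : nbhd G X C ⊆ Y) : suppV G Y (compMap G hYX C) = suppV G X C := by
  refine Subset.antisymm ?_ (suppV_subset_compMap G hYX C)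
  intro v hv
  obtain ⟨hvY, hc⟩ := mem_suppV.1 hv
  obtain ⟨w, hw⟩ := C.exists_rep
  have hw' : (G.induce Xᶜ).connectedComponentMk w = C := hw
  have hw1 : w.1 ∈ suppV G X C := ⟨w, hw, rfl⟩
  have hmk : (G.induce Yᶜ).connectedComponentMk (inclHom G hYX w) = compMap G hYX C := by
    rw [← hw', compMap_mk]
  have hr : (G.induce Yᶜ).Reachable (inclHom G hYX w) ⟨v, hvY⟩ :=
    ConnectedComponent.eq.1 (hmk.trans hc.symm)
  obtain ⟨p⟩ := hr
  exact suppV_walk hYX hC p hw1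

lemma nbhd_subset {G : SimpleGraph V} {X : Set V} (C : Comps G X) : nbhd G X C ⊆ X :=
  fun _ h => h.1

lemma nbhd_compMap {G : SimpleGraph V} {X Y : Set V} (hYX : Y ⊆ X) {C : Comps G X}
    (hC : nbhd G X C = Y) : nbhd G Y (compMap G hYX C) = Y := by
  refine Subset.antisymm (nbhd_subset _) ?_
  intro y hy
  have hy' : y ∈ nbhd G X C := by rw [hC]; exact hy
  obtain ⟨hyX, v, hvs, hadj⟩ := hy'
  refine ⟨hy, v, ?_, hadj⟩
  rw [suppV_compMap hYX C (hC ▸ Subset.rfl)]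
  exact hvs

lemma crit_of_infinite {G : SimpleGraph V} {X Y : Set V} (hX : X.Finite) (hYX : Y ⊆ X)
    (hinf : (compsWithNbhd G X Y).Infinite) : Critical G Y := by
  refine ⟨hX.subset hYX, ?_⟩
  have hinj : InjOn (compMap G hYX) (compsWithNbhd G X Y) := by
    intro C1 h1 C2 h2 heq
    have e1 : suppV G Y (compMap G hYX C1) = suppV G X C1 :=
      suppV_compMap hYX C1 (h1 ▸ Subset.rfl)
    have e2 : suppV G Y (compMap G hYX C2) = suppV G X C2 :=
      suppV_compMap hYX C2 (h2 ▸ Subset.rfl)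
    obtain ⟨v, hv⟩ := suppV_nonempty C1
    have hv2 : v ∈ suppV G X C2 := by
      rw [← e2, ← heq, e1]; exact hv
    exact comps_eq_of_mem_suppV hv hv2
  have himg : compMap G hYX '' (compsWithNbhd G X Y) ⊆ compsWithNbhd G Y Y := by
    rintro _ ⟨C, hC, rfl⟩
    exact nbhd_compMap hYX hC
  exact ((hinf.image hinj).mono himg)

lemma infinite_of_crit {G : SimpleGraph V} {X Y : Set V} (hX : X.Finite) (hYX : Y ⊆ X)
    (hcrit : Critical G Y) : (compsWithNbhd G X Y).Infinite := by
  set bad : Set (Comps G Y) := {D | (suppV G Y D ∩ X).Nonempty} with hbad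
  have hbadfin : bad.Finite := by
    have hsub : bad ⊆ ⋃ x ∈ X, {D : Comps G Y | x ∈ suppV G Y D} := by
      rintro D ⟨x, hxs, hxX⟩
      exact mem_biUnion hxX hxs
    refine Finite.subset (Finite.biUnion hX fun x _ => ?_) hsub
    exact Set.Subsingleton.finite (fun D hD D' hD' => comps_eq_of_mem_suppV hD hD')
  have hgood : (compsWithNbhd G Y Y \ bad).Infinite := hcrit.2.diff hbadfin
  have hcover : compsWithNbhd G Y Y \ bad ⊆ compMap G hYX '' (compsWithNbhd G X Y) := by
    rintro D ⟨hD, hDbad⟩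
    have hdisj : suppV G Y D ∩ X = ∅ := not_nonempty_iff_eq_empty.mp hDbad
    obtain ⟨v, hv⟩ := suppV_nonempty D
    have hvX : v ∉ X := fun h => by
      have : v ∈ suppV G Y D ∩ X := ⟨hv, h⟩
      rw [hdisj] at this; exact this
    set C : Comps G X := (G.induce Xᶜ).connectedComponentMk ⟨v, hvX⟩ with hCdef
    obtain ⟨hvY, hvmk⟩ := mem_suppV.1 hv
    have hmap : compMap G hYX C = D := by
      rw [hCdef, compMap_mk, ← hvmk]
      rfl
    have hsubY : nbhd G X C ⊆ Y := by
      intro x hx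
      obtain ⟨hxX, w, hws, hadj⟩ := hx
      by_contra hxY
      have hwD : w ∈ suppV G Y D := by
        rw [← hmap]; exact suppV_subset_compMap G hYX C hws
      obtain ⟨hwY, hwmk⟩ := mem_suppV.1 hwD
      have hxD : x ∈ suppV G Y D := by
        refine mem_suppV.2 ⟨hxY, ?_⟩
        rw [← hwmk]
        exact ConnectedComponent.sound
          (SimpleGraph.Adj.reachable (show (G.induce Yᶜ).Adj ⟨x, hxY⟩ ⟨w, hwY⟩ from hadj))
      have : x ∈ suppV G Y D ∩ X := ⟨hxD, hxX⟩
      rw [hdisj] at this; exact this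
    have hse : suppV G Y D = suppV G X C := by
      rw [← hmap]; exact suppV_compMap hYX C hsubY
    have hCY : nbhd G X C = Y := by
      refine Subset.antisymm hsubY ?_
      intro y hy
      have hy' : y ∈ nbhd G Y D := by rw [hD]; exact hy
      obtain ⟨hyY, w, hws, hadj⟩ := hy'
      exact ⟨hYX hy, w, hse ▸ hws, hadj⟩
    exact ⟨C, hCY, hmap⟩
  exact Set.Infinite.of_image _ (hgood.mono hcover)


lemma critIn_finite (G : SimpleGraph V) {X : Set V} (hX : X.Finite) : (CritIn G X).Finite :=
  hX.finite_subsets.subset fun _ h => h.1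

lemma gammaBasis (G : SimpleGraph V) (X : Set V) :
    @TopologicalSpace.IsTopologicalBasis (Gamma G X) (gammaTop G X) (gammaBasic G X) := by
  letI := gammaTop G X
  refine ⟨?_, ?_, rfl⟩
  · rintro t1 ht1 t2 ht2 x ⟨hx1, hx2⟩
    rcases ht1 with ⟨C, rfl⟩ | ⟨Y1, 𝒞1, hs1, hf1, rfl⟩
    · exact ⟨{Sum.inl C}, Or.inl ⟨C, rfl⟩, hx1, by
        rintro a rfl; exact ⟨hx1 ▸ rfl, hx1 ▸ hx2⟩⟩
    · rcases ht2 with ⟨C, rfl⟩ | ⟨Y2, 𝒞2, hs2, hf2, rfl⟩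
      · refine ⟨{Sum.inl C}, Or.inl ⟨C, rfl⟩, hx2, ?_⟩
        rintro a rfl
        exact ⟨hx2 ▸ hx1, rfl⟩
      · cases x with
        | inl C =>
          have hC1 : C ∈ 𝒞1 := by
            rcases hx1 with ⟨C', hC', h⟩ | h
            · cases h; exact hC'
            · simp at h
          have hC2 : C ∈ 𝒞2 := by
            rcases hx2 with ⟨C', hC', h⟩ | h
            · cases h; exact hC'
            · simp at h
          exact ⟨{Sum.inl C}, Or.inl ⟨C, rfl⟩, rfl, by
            rintro a rfl
            exact ⟨Or.inl ⟨C, hC1, rfl⟩, Or.inl ⟨C, hC2, rfl⟩⟩⟩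
        | inr Y =>
          have hY1 : Y = Y1 := by
            rcases hx1 with ⟨C', _, h⟩ | h
            · simp at h
            · simpa using h
          have hY2 : Y = Y2 := by
            rcases hx2 with ⟨C', _, h⟩ | h
            · simp at h
            · simpa using h
          subst hY1; subst hY2
          refine ⟨Sum.inl '' (𝒞1 ∩ 𝒞2) ∪ {Sum.inr Y}, ?_, Or.inr rfl, ?_⟩
          · refine Or.inr ⟨Y, 𝒞1 ∩ 𝒞2, fun C hC => hs1 hC.1, ?_, rfl⟩
            refine (hf1.union hf2).subset ?_
            rintro C ⟨hCc, hCn⟩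
            by_cases h1 : C ∈ 𝒞1
            · exact Or.inr ⟨hCc, fun h2 => hCn ⟨h1, h2⟩⟩
            · exact Or.inl ⟨hCc, h1⟩
          · rintro a (⟨C, ⟨h1, h2⟩, rfl⟩ | rfl)
            · exact ⟨Or.inl ⟨C, h1, rfl⟩, Or.inl ⟨C, h2, rfl⟩⟩
            · exact ⟨Or.inr rfl, Or.inr rfl⟩
  · apply eq_univ_of_forall
    intro x
    cases x with
    | inl C => exact ⟨{Sum.inl C}, Or.inl ⟨C, rfl⟩, rfl⟩
    | inr Y =>
      exact ⟨Sum.inl '' compsWithNbhd G X Y.1 ∪ {Sum.inr Y},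
        Or.inr ⟨Y, compsWithNbhd G X Y.1, Subset.rfl, by simp, rfl⟩, Or.inr rfl⟩


/-- `Γ_X` is a compact Hausdorff space in which `C_X` is a dense,
discrete, open subspace; the remainder `crit(X)` is finite. -/
theorem stmt13 (G : SimpleGraph V) (X : Set V) (hX : X.Finite) :
    @CompactSpace (Gamma G X) (gammaTop G X) ∧
    @T2Space (Gamma G X) (gammaTop G X) ∧
    @IsOpen (Gamma G X) (gammaTop G X) (Set.range (Sum.inl : Comps G X → Gamma G X)) ∧
    @Dense (Gamma G X) (gammaTop G X)
      (Set.range (Sum.inl : Comps G X → Gamma G X)) ∧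
    (∀ C : Comps G X, @IsOpen (Gamma G X) (gammaTop G X) ({Sum.inl C} : Set (Gamma G X))) ∧
    (CritIn G X).Finite := by
  letI := gammaTop G X
  have hbasis := gammaBasis G X
  have hsingleton : ∀ C : Comps G X, IsOpen ({Sum.inl C} : Set (Gamma G X)) :=
    fun C => hbasis.isOpen (Or.inl ⟨C, rfl⟩)
  have hcritfin : (CritIn G X).Finite := critIn_finite G hX
  haveI : Finite (CritIn G X) := hcritfin.to_subtype
  refine ⟨?_, ?_, ?_, ?_, hsingleton, hcritfin⟩
  · -- compact
    rw [← isCompact_univ_iff]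
    refine isCompact_of_finite_subcover fun {ι} U hUo hcover => ?_
    have h1 : ∀ Y : CritIn G X, ∃ (i : ι) (𝒞 : Set (Comps G X)),
        (compsWithNbhd G X Y.1 \ 𝒞).Finite ∧
        Sum.inl '' 𝒞 ∪ {Sum.inr Y} ⊆ U i := by
      intro Y
      obtain ⟨i, hi⟩ := mem_iUnion.mp (hcover (mem_univ (Sum.inr Y)))
      obtain ⟨t, ht, hxt, hsub⟩ := hbasis.exists_subset_of_mem_open hi (hUo i)
      rcases ht with ⟨C, rfl⟩ | ⟨Y', 𝒞, _, hf, rfl⟩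
      · cases hxt
      · have hYY' : Y' = Y := by
          rcases hxt with ⟨C', _, h⟩ | h
          · simp at h
          · exact (by simpa using h : Y = Y').symm
        subst hYY'
        exact ⟨i, 𝒞, hf, hsub⟩
    choose i 𝒞 hfin hsub using h1
    have h2 : ∀ C : Comps G X, ∃ j : ι, Sum.inl C ∈ U j := fun C =>
      mem_iUnion.mp (hcover (mem_univ (Sum.inl C)))
    choose j hj using h2
    set R : Set (Comps G X) := {C | ∀ Y : CritIn G X, C ∉ 𝒞 Y} with hR
    have hRfin : R.Finite := by
      have hsubR : R ⊆ ⋃ N ∈ {t : Set V | t ⊆ X}, (compsWithNbhd G X N ∩ R) := by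
        intro C hC
        exact mem_biUnion (nbhd_subset C) ⟨rfl, hC⟩
      refine Finite.subset (Finite.biUnion hX.finite_subsets fun N hN => ?_) hsubR
      by_cases hcrit : Critical G N
      · refine (hfin ⟨N, hN, hcrit⟩).subset ?_
        rintro C ⟨hC1, hC2⟩
        exact ⟨hC1, hC2 ⟨N, hN, hcrit⟩⟩
      · refine Finite.subset ?_ (inter_subset_left)
        by_contra hinf
        exact hcrit (crit_of_infinite hX hN hinf)
    have hTfin : (Set.range i ∪ j '' R).Finite := (finite_range i).union (hRfin.image j)
    refine ⟨hTfin.toFinset, fun x _ => ?_⟩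
    rw [mem_iUnion₂]
    cases x with
    | inr Y =>
      exact ⟨i Y, by simp [hTfin.mem_toFinset], hsub Y (Or.inr rfl)⟩
    | inl C =>
      by_cases hC : C ∈ R
      · exact ⟨j C, by simp [hTfin.mem_toFinset]; exact Or.inr ⟨C, hC, rfl⟩, hj C⟩
      · have : ∃ Y : CritIn G X, C ∈ 𝒞 Y := by
          simpa [hR, not_forall] using hC
        obtain ⟨Y, hY⟩ := this
        exact ⟨i Y, by simp [hTfin.mem_toFinset], hsub Y (Or.inl ⟨C, hY, rfl⟩)⟩
  · -- T2
    constructor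
    intro x y hxy
    cases x with
    | inl C =>
      cases y with
      | inl C' =>
        refine ⟨{Sum.inl C}, {Sum.inl C'}, hsingleton C, hsingleton C', rfl, rfl, ?_⟩
        refine Set.disjoint_singleton.mpr ?_
        exact hxy
      | inr Y =>
        refine ⟨{Sum.inl C},
          Sum.inl '' (compsWithNbhd G X Y.1 \ {C}) ∪ {Sum.inr Y},
          hsingleton C,
          hbasis.isOpen (Or.inr ⟨Y, _, diff_subset, by
            refine Finite.subset (finite_singleton C) ?_
            rintro C' ⟨h1, h2⟩
            simp only [mem_diff, mem_singleton_iff, not_and, not_not] at h2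
            exact h2 h1, rfl⟩),
          rfl, Or.inr rfl, ?_⟩
        refine Set.disjoint_singleton_left.mpr ?_
        rintro (⟨C', hC', h⟩ | h)
        · cases h; exact hC'.2 rfl
        · cases h
    | inr Y =>
      cases y with
      | inl C =>
        refine ⟨Sum.inl '' (compsWithNbhd G X Y.1 \ {C}) ∪ {Sum.inr Y}, {Sum.inl C},
          hbasis.isOpen (Or.inr ⟨Y, _, diff_subset, by
            refine Finite.subset (finite_singleton C) ?_
            rintro C' ⟨h1, h2⟩
            simp only [mem_diff, mem_singleton_iff, not_and, not_not] at h2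
            exact h2 h1, rfl⟩),
          hsingleton C, Or.inr rfl, rfl, ?_⟩
        refine Set.disjoint_singleton_right.mpr ?_
        rintro (⟨C', hC', h⟩ | h)
        · cases h; exact hC'.2 rfl
        · cases h
      | inr Y' =>
        have hYY' : Y ≠ Y' := fun h => hxy (h ▸ rfl)
        refine ⟨Sum.inl '' compsWithNbhd G X Y.1 ∪ {Sum.inr Y},
          Sum.inl '' compsWithNbhd G X Y'.1 ∪ {Sum.inr Y'},
          hbasis.isOpen (Or.inr ⟨Y, _, Subset.rfl, by simp, rfl⟩),
          hbasis.isOpen (Or.inr ⟨Y', _, Subset.rfl, by simp, rfl⟩),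
          Or.inr rfl, Or.inr rfl, ?_⟩
        refine Set.disjoint_left.mpr ?_
        rintro a (⟨C, hC, rfl⟩ | rfl)
        · rintro (⟨C', hC', h⟩ | h)
          · cases h
            exact hYY' (Subtype.ext (hC.symm.trans hC'))
          · cases h
        · rintro (⟨C', _, h⟩ | h)
          · simp at h
          · exact hYY' (Sum.inr_injective h)
  · -- open range
    have : (Set.range (Sum.inl : Comps G X → Gamma G X)) = ⋃ C : Comps G X, {Sum.inl C} := by
      ext a; simp [eq_comm]
    refine (congrArg (@IsOpen (Gamma G X) _) this).mpr ?_
    exact isOpen_iUnion fun C => hsingleton C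
  · -- dense
    rw [hbasis.dense_iff]
    rintro o (⟨C, rfl⟩ | ⟨Y, 𝒞, hs, hf, rfl⟩) ho
    · exact ⟨Sum.inl C, rfl, C, rfl⟩
    · have hinf : (compsWithNbhd G X Y.1).Infinite := infinite_of_crit hX Y.2.1 Y.2.2
      have h𝒞 : 𝒞.Infinite := by
        by_contra hfin
        rw [Set.not_infinite] at hfin
        exact hinf ((hf.union hfin).subset fun C hC => by
          by_cases h : C ∈ 𝒞
          · exact Or.inr h
          · exact Or.inl ⟨hC, h⟩)
      obtain ⟨C, hC⟩ := h𝒞.nonempty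
      exact ⟨Sum.inl C, Or.inl ⟨C, hC, rfl⟩, C, rfl⟩
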